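/- In the wreath product Z ≀ B with B abelian, an element (f, 1) is a commutator if and only if there exist t, t' ∈ B such that f lies in the ideal of Z[B] generated by 1 - Z^t and 1 - Z^{t'}. Consequently, the set of commutators of Z ≀ B is the union over t, t' ∈ B of ⟨1 - Z^t, 1 - Z^{t'}⟩ × {1}. -/

import Mathlib

open MonoidAlgebra
open scoped commutatorElement

/-- `AddAut A` as multiplicative automorphisms of `Multiplicative A`. -/
def addAutToMulAut (A : Type*) [AddGroup A] : Multiplicative (AddAut A) →* MulAut (Multiplicative A) where
  toFun e := AddEquiv.toMultiplicative e.toAdd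
  map_one' := rfl
  map_mul' _ _ := rfl

/-- The action of `B` on (the additive group of) a commutative ring `R`
through a homomorphism `ψ : B →* Rˣ`, by multiplication. -/
def ringMulAction {R : Type*} [CommRing R] {B : Type*} [CommGroup B] (ψ : B →* Rˣ) :
    B →* MulAut (Multiplicative R) :=
  (addAutToMulAut R).comp (AddAut.mulLeft.comp ψ)

/-- The semidirect product `R ⋊ B` where `B` acts on the additive group of the
commutative ring `R` by multiplication via `ψ : B →* Rˣ`. -/
abbrev RingSemidirect (R : Type*) [CommRing R] {B : Type*} [CommGroup B] (ψ : B →* Rˣ) :=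
  SemidirectProduct (Multiplicative R) B (ringMulAction ψ)

/-- The element `(f, b)` of `R ⋊ B`. -/
abbrev RingSemidirect.mk {R : Type*} [CommRing R] {B : Type*} [CommGroup B] (ψ : B →* Rˣ)
    (f : R) (b : B) : RingSemidirect R ψ :=
  ⟨Multiplicative.ofAdd f, b⟩

/-- The canonical homomorphism `B →* (ℤ[B])ˣ`, sending `b` to the monomial `Z^b`. -/
noncomputable abbrev zUnits (B : Type*) [CommGroup B] : B →* (MonoidAlgebra ℤ B)ˣ :=
  (MonoidAlgebra.of ℤ B).toHomUnits

/-- The wreath product `ℤ ≀ B`, realized as `ℤ[B] ⋊ B` with `B` acting by multiplication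
by monomials. -/
abbrev ZWreath (B : Type*) [CommGroup B] := RingSemidirect (MonoidAlgebra ℤ B) (zUnits B)

/-- The element `(f, b)` of `ℤ ≀ B = ℤ[B] ⋊ B`. -/
noncomputable abbrev ZWreath.mk {B : Type*} [CommGroup B] (f : MonoidAlgebra ℤ B) (b : B) : ZWreath B :=
  RingSemidirect.mk (zUnits B) f b


section
variable {R : Type*} [CommRing R] {B : Type*} [CommGroup B] (ψ : B →* Rˣ)

lemma action_eq (b : B) (r : R) :
    ringMulAction ψ b (Multiplicative.ofAdd r) = Multiplicative.ofAdd ((ψ b : R) * r) := rfl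

lemma action_inv_eq (b : B) (r : R) :
    ((ringMulAction ψ b)⁻¹) (Multiplicative.ofAdd r) =
      Multiplicative.ofAdd (((ψ b)⁻¹ : Rˣ) * r : R) := rfl

lemma comm_eq (a b : R) (s u : B) :
    ⁅RingSemidirect.mk ψ a s, RingSemidirect.mk ψ b u⁆ =
      RingSemidirect.mk ψ ((1 - (ψ u : R)) * a - (1 - (ψ s : R)) * b) 1 := by
  ext
  · simp only [commutatorElement_def, RingSemidirect.mk, SemidirectProduct.mul_left,
      SemidirectProduct.inv_left, SemidirectProduct.mul_right, SemidirectProduct.inv_right,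
      action_eq, action_inv_eq, ← ofAdd_neg, ← ofAdd_add, EmbeddingLike.apply_eq_iff_eq]
    have h1 : s * u * s⁻¹ = u := by simp [mul_comm, mul_assoc]
    have h2 : u * u⁻¹ = 1 := by simp [mul_comm, mul_assoc]
    simp only [← mul_assoc, ← Units.val_mul, ← map_mul, h1, h2, map_one, Units.val_one]
    ring
  · simp [commutatorElement_def, RingSemidirect.mk, mul_comm]

end

lemma zUnits_coe {B : Type*} [CommGroup B] (b : B) :
    ((zUnits B b : (MonoidAlgebra ℤ B)ˣ) : MonoidAlgebra ℤ B) = MonoidAlgebra.of ℤ B b := rfl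

/-- In `ℤ ≀ B`, an element `(f, 1)` is a commutator iff there exist `t, t' ∈ B`
with `f` in the ideal of `ℤ[B]` generated by `1 - Z^t` and `1 - Z^{t'}`. -/
theorem isCommutator_iff_mem_span {B : Type*} [CommGroup B] (f : MonoidAlgebra ℤ B) :
    (∃ g h : ZWreath B, ZWreath.mk f 1 = ⁅g, h⁆) ↔
      ∃ t t' : B,
        f ∈ Ideal.span ({1 - MonoidAlgebra.of ℤ B t, 1 - MonoidAlgebra.of ℤ B t'} :
          Set (MonoidAlgebra ℤ B)) := by
  constructor
  · rintro ⟨⟨a, s⟩, ⟨b, u⟩, hgh⟩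
    rw [show (⟨a, s⟩ : ZWreath B) = ZWreath.mk a.toAdd s from rfl,
      show (⟨b, u⟩ : ZWreath B) = ZWreath.mk b.toAdd u from rfl, comm_eq] at hgh
    have hf : f = (1 - MonoidAlgebra.of ℤ B u) * a.toAdd
        - (1 - MonoidAlgebra.of ℤ B s) * b.toAdd := by
      have := congrArg (fun x : ZWreath B => x.left.toAdd) hgh
      simpa [zUnits_coe] using this
    refine ⟨u, s, ?_⟩
    rw [Ideal.mem_span_pair]
    exact ⟨a.toAdd, -b.toAdd, by rw [hf]; ring⟩
  · rintro ⟨t, t', ht⟩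
    rw [Ideal.mem_span_pair] at ht
    obtain ⟨c, d, hcd⟩ := ht
    refine ⟨ZWreath.mk c t', ZWreath.mk (-d) t, ?_⟩
    rw [comm_eq]
    congr 1
    rw [← hcd]
    simp [zUnits_coe]
    ring
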